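/- The discretized Bellman operator T is a contraction in the sup-norm with contraction factor λ/(λ+δ) < 1 on the component coming from the no-intervention branch combined with the nonexpansive intervention branch; precisely, for vectors v, w ∈ ℝ^{N+1} with v[0] = w[0] = 0, defining (Tv)[j] = max{ (1/(λ+δ)) (G(jh) + λ Σ_{i=0}^{j} v[j−i] p_i), max_{0 ≤ i ≤ N−j} (v[j+i] − C(jh, ih)) }, if C(r,ζ) ≥ c₀ > 0 for all arguments, then repeated application of T starting from the zero vector converges to the unique fixed point of T. -/

import Mathlib

open Filter

/-- The discretized Bellman operator on ℝ^{N+1}, with step h = 1/N and convention (Tv)[0] = 0. -/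
noncomputable def bellmanOp (N : ℕ) (lam delta : ℝ) (G : ℝ → ℝ) (p : ℕ → ℝ)
    (C : ℝ → ℝ → ℝ) (v : Fin (N + 1) → ℝ) : Fin (N + 1) → ℝ :=
  fun j =>
    if j.val = 0 then 0
    else
      max
        ((1 / (lam + delta)) *
          (G (j.val * (1 / N)) +
            lam * ∑ i ∈ Finset.range (j.val + 1),
              v ⟨j.val - i, lt_of_le_of_lt (Nat.sub_le _ _) j.isLt⟩ * p i))
        ((Finset.range (N - j.val + 1)).attach.sup'
          (Finset.attach_nonempty_iff.mpr ⟨0, Finset.mem_range.mpr (Nat.succ_pos _)⟩)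
          (fun i =>
            v ⟨j.val + i.val, by
                have hi := Finset.mem_range.mp i.prop
                have hj := j.isLt
                omega⟩ -
              C (j.val * (1 / N)) (i.val * (1 / N))))

noncomputable def bA (N : ℕ) (lam delta : ℝ) (G : ℝ → ℝ) (p : ℕ → ℝ)
    (v : Fin (N + 1) → ℝ) (j : Fin (N + 1)) : ℝ :=
  (1 / (lam + delta)) *
    (G (j.val * (1 / N)) +
      lam * ∑ i ∈ Finset.range (j.val + 1),
        v ⟨j.val - i, lt_of_le_of_lt (Nat.sub_le _ _) j.isLt⟩ * p i)

noncomputable def bB (N : ℕ) (C : ℝ → ℝ → ℝ) (v : Fin (N + 1) → ℝ) (j : Fin (N + 1)) : ℝ :=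
  (Finset.range (N - j.val + 1)).attach.sup'
    (Finset.attach_nonempty_iff.mpr (Finset.nonempty_range_add_one))
    (fun i =>
      v ⟨j.val + i.val, by
          have hi := Finset.mem_range.mp i.prop
          have hj := j.isLt
          omega⟩ -
        C (j.val * (1 / N)) (i.val * (1 / N)))

lemma bellman_eq (N : ℕ) (lam delta : ℝ) (G : ℝ → ℝ) (p : ℕ → ℝ) (C : ℝ → ℝ → ℝ)
    (v : Fin (N + 1) → ℝ) (j : Fin (N + 1)) (hj : j.val ≠ 0) :
    bellmanOp N lam delta G p C v j = max (bA N lam delta G p v j) (bB N C v j) := by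
  simp only [bellmanOp, bA, bB, if_neg hj]

lemma bellman_zero (N : ℕ) (lam delta : ℝ) (G : ℝ → ℝ) (p : ℕ → ℝ) (C : ℝ → ℝ → ℝ)
    (v : Fin (N + 1) → ℝ) (j : Fin (N + 1)) (hj : j.val = 0) :
    bellmanOp N lam delta G p C v j = 0 := by
  simp only [bellmanOp, if_pos hj]
open Filter

lemma bA_le (N : ℕ) (lam delta : ℝ) (hlam : 0 < lam) (hdelta : 0 < delta)
    (G : ℝ → ℝ) (p : ℕ → ℝ) (hp : ∀ i, 0 ≤ p i)
    (hpsum : ∑ i ∈ Finset.range (N + 1), p i ≤ 1)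
    (v w : Fin (N + 1) → ℝ) (D : ℝ) (hD : 0 ≤ D) (h : ∀ k, v k ≤ w k + D)
    (j : Fin (N + 1)) :
    bA N lam delta G p v j ≤ bA N lam delta G p w j + lam / (lam + delta) * D := by
  have hld : (0:ℝ) < lam + delta := by linarith
  have hsub : ∑ i ∈ Finset.range (j.val + 1), p i ≤ 1 := by
    refine le_trans (Finset.sum_le_sum_of_subset_of_nonneg
      (Finset.range_subset_range.mpr (by omega : j.val + 1 ≤ N + 1)) (fun i _ _ => hp i)) hpsum
  have hS : (∑ i ∈ Finset.range (j.val + 1),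
        v ⟨j.val - i, lt_of_le_of_lt (Nat.sub_le _ _) j.isLt⟩ * p i)
      ≤ (∑ i ∈ Finset.range (j.val + 1),
        w ⟨j.val - i, lt_of_le_of_lt (Nat.sub_le _ _) j.isLt⟩ * p i) + D := by
    calc (∑ i ∈ Finset.range (j.val + 1),
        v ⟨j.val - i, lt_of_le_of_lt (Nat.sub_le _ _) j.isLt⟩ * p i)
        ≤ ∑ i ∈ Finset.range (j.val + 1),
          (w ⟨j.val - i, lt_of_le_of_lt (Nat.sub_le _ _) j.isLt⟩ * p i + D * p i) := by
          refine Finset.sum_le_sum fun i _ => ?_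
          have h1 := h ⟨j.val - i, lt_of_le_of_lt (Nat.sub_le _ _) j.isLt⟩
          have h2 := hp i
          nlinarith
      _ = (∑ i ∈ Finset.range (j.val + 1),
          w ⟨j.val - i, lt_of_le_of_lt (Nat.sub_le _ _) j.isLt⟩ * p i)
          + D * ∑ i ∈ Finset.range (j.val + 1), p i := by
          rw [Finset.sum_add_distrib, Finset.mul_sum]
      _ ≤ _ + D * 1 := by gcongr
      _ = _ + D := by rw [mul_one]
  unfold bA
  calc (1 / (lam + delta)) *
      (G (j.val * (1 / N)) + lam * ∑ i ∈ Finset.range (j.val + 1),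
        v ⟨j.val - i, lt_of_le_of_lt (Nat.sub_le _ _) j.isLt⟩ * p i)
      ≤ (1 / (lam + delta)) *
      (G (j.val * (1 / N)) + lam * ((∑ i ∈ Finset.range (j.val + 1),
        w ⟨j.val - i, lt_of_le_of_lt (Nat.sub_le _ _) j.isLt⟩ * p i) + D)) := by
        gcongr
    _ = (1 / (lam + delta)) *
      (G (j.val * (1 / N)) + lam * ∑ i ∈ Finset.range (j.val + 1),
        w ⟨j.val - i, lt_of_le_of_lt (Nat.sub_le _ _) j.isLt⟩ * p i)
        + lam / (lam + delta) * D := by ring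

lemma bB_le (N : ℕ) (C : ℝ → ℝ → ℝ) (v w : Fin (N + 1) → ℝ) (D : ℝ)
    (h : ∀ k, v k ≤ w k + D) (j : Fin (N + 1)) :
    bB N C v j ≤ bB N C w j + D := by
  unfold bB
  refine Finset.sup'_le _ _ fun i hi => ?_
  have hk : j.val + i.val < N + 1 := by
    have hi2 := Finset.mem_range.mp i.prop
    have hj := j.isLt
    omega
  show v ⟨j.val + i.val, hk⟩ - C (j.val * (1 / N)) (i.val * (1 / N)) ≤ _ + D
  have h1 := h ⟨j.val + i.val, hk⟩
  have h2 : w ⟨j.val + i.val, hk⟩ - C (j.val * (1 / N)) (i.val * (1 / N)) ≤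
      (Finset.range (N - j.val + 1)).attach.sup'
        (Finset.attach_nonempty_iff.mpr (Finset.nonempty_range_add_one))
        (fun i => w ⟨j.val + i.val, by
            have hi := Finset.mem_range.mp i.prop
            have hj := j.isLt
            omega⟩ - C (j.val * (1 / N)) (i.val * (1 / N))) :=
    Finset.le_sup' (f := fun i : {x // x ∈ Finset.range (N - j.val + 1)} =>
      w ⟨j.val + i.val, by
          have hi := Finset.mem_range.mp i.prop
          have hj := j.isLt
          omega⟩ - C (j.val * (1 / N)) (i.val * (1 / N))) (Finset.mem_attach _ i)
  linarith
lemma bellman_le (N : ℕ) (lam delta : ℝ) (hlam : 0 < lam) (hdelta : 0 < delta)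
    (G : ℝ → ℝ) (p : ℕ → ℝ) (hp : ∀ i, 0 ≤ p i)
    (hpsum : ∑ i ∈ Finset.range (N + 1), p i ≤ 1) (C : ℝ → ℝ → ℝ)
    (v w : Fin (N + 1) → ℝ) (D : ℝ) (hD : 0 ≤ D) (h : ∀ k, v k ≤ w k + D)
    (j : Fin (N + 1)) :
    bellmanOp N lam delta G p C v j ≤ bellmanOp N lam delta G p C w j + D := by
  by_cases hj : j.val = 0
  · rw [bellman_zero _ _ _ _ _ _ _ _ hj, bellman_zero _ _ _ _ _ _ _ _ hj]
    linarith
  · rw [bellman_eq _ _ _ _ _ _ _ _ hj, bellman_eq _ _ _ _ _ _ _ _ hj]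
    have hld : (0:ℝ) < lam + delta := by linarith
    have hq : lam / (lam + delta) ≤ 1 := by
      rw [div_le_one hld]; linarith
    have hA := bA_le N lam delta hlam hdelta G p hp hpsum v w D hD h j
    have hB := bB_le N C v w D h j
    have hA' : bA N lam delta G p v j ≤ bA N lam delta G p w j + D := by nlinarith
    apply max_le
    · exact le_trans hA' (add_le_add_left (le_max_left _ _) D)
    · exact le_trans hB (add_le_add_left (le_max_right _ _) D)

lemma bellman_mono (N : ℕ) (lam delta : ℝ) (hlam : 0 < lam) (hdelta : 0 < delta)
    (G : ℝ → ℝ) (p : ℕ → ℝ) (hp : ∀ i, 0 ≤ p i)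
    (hpsum : ∑ i ∈ Finset.range (N + 1), p i ≤ 1) (C : ℝ → ℝ → ℝ)
    (v w : Fin (N + 1) → ℝ) (h : ∀ k, v k ≤ w k) (j : Fin (N + 1)) :
    bellmanOp N lam delta G p C v j ≤ bellmanOp N lam delta G p C w j := by
  have := bellman_le N lam delta hlam hdelta G p hp hpsum C v w 0 le_rfl
    (fun k => by simpa using h k) j
  simpa using this

lemma bellman_bdd (N : ℕ) (hN : 0 < N) (lam delta : ℝ) (hlam : 0 < lam) (hdelta : 0 < delta)
    (G : ℝ → ℝ) (KG : ℝ) (hGbdd : ∀ r ∈ Set.Icc (0 : ℝ) 1, G r ≤ KG) (hKG : 0 ≤ KG)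
    (p : ℕ → ℝ) (hp : ∀ i, 0 ≤ p i)
    (hpsum : ∑ i ∈ Finset.range (N + 1), p i ≤ 1)
    (C : ℝ → ℝ → ℝ) (c₀ : ℝ) (hc₀ : 0 < c₀) (hC : ∀ r ζ, c₀ ≤ C r ζ)
    (v : Fin (N + 1) → ℝ) (h : ∀ k, v k ≤ KG / delta) (j : Fin (N + 1)) :
    bellmanOp N lam delta G p C v j ≤ KG / delta := by
  have hld : (0:ℝ) < lam + delta := by linarith
  have hM : 0 ≤ KG / delta := by positivity
  by_cases hj : j.val = 0
  · rw [bellman_zero _ _ _ _ _ _ _ _ hj]; exact hM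
  · rw [bellman_eq _ _ _ _ _ _ _ _ hj]
    have hmem : (j.val : ℝ) * (1 / N) ∈ Set.Icc (0 : ℝ) 1 := by
      constructor
      · positivity
      · have hjN : (j.val : ℝ) ≤ N := by exact_mod_cast Nat.lt_succ_iff.mp j.isLt
        have hN' : (0:ℝ) < N := by exact_mod_cast hN
        rw [mul_one_div, div_le_one hN']
        exact hjN
    apply max_le
    · unfold bA
      have hsub : ∑ i ∈ Finset.range (j.val + 1), p i ≤ 1 :=
        le_trans (Finset.sum_le_sum_of_subset_of_nonneg
          (Finset.range_subset_range.mpr (by omega : j.val + 1 ≤ N + 1)) (fun i _ _ => hp i)) hpsum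
      have hS : (∑ i ∈ Finset.range (j.val + 1),
          v ⟨j.val - i, lt_of_le_of_lt (Nat.sub_le _ _) j.isLt⟩ * p i) ≤ KG / delta := by
        calc (∑ i ∈ Finset.range (j.val + 1),
            v ⟨j.val - i, lt_of_le_of_lt (Nat.sub_le _ _) j.isLt⟩ * p i)
            ≤ ∑ i ∈ Finset.range (j.val + 1), KG / delta * p i := by
              refine Finset.sum_le_sum fun i _ => ?_
              have := h ⟨j.val - i, lt_of_le_of_lt (Nat.sub_le _ _) j.isLt⟩
              have := hp i
              nlinarith
          _ = KG / delta * ∑ i ∈ Finset.range (j.val + 1), p i := by rw [Finset.mul_sum]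
          _ ≤ KG / delta * 1 := by gcongr
          _ = KG / delta := mul_one _
      have hG := hGbdd _ hmem
      have key : G ((j.val : ℝ) * (1 / N)) + lam * ∑ i ∈ Finset.range (j.val + 1),
          v ⟨j.val - i, lt_of_le_of_lt (Nat.sub_le _ _) j.isLt⟩ * p i
          ≤ KG + lam * (KG / delta) := by nlinarith
      calc (1 / (lam + delta)) * (G ((j.val : ℝ) * (1 / N)) +
            lam * ∑ i ∈ Finset.range (j.val + 1),
              v ⟨j.val - i, lt_of_le_of_lt (Nat.sub_le _ _) j.isLt⟩ * p i)
          ≤ (1 / (lam + delta)) * (KG + lam * (KG / delta)) := by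
            have hc : (0:ℝ) ≤ 1 / (lam + delta) := by positivity
            nlinarith
        _ = KG / delta * ((lam + delta) / (lam + delta)) := by field_simp; ring
        _ = KG / delta := by rw [div_self (ne_of_gt hld), mul_one]
    · unfold bB
      refine Finset.sup'_le _ _ fun i hi => ?_
      have hk : j.val + i.val < N + 1 := by
        have hi2 := Finset.mem_range.mp i.prop
        have hj2 := j.isLt
        omega
      show v ⟨j.val + i.val, hk⟩ - C (j.val * (1 / N)) (i.val * (1 / N)) ≤ KG / delta
      have h1 := h ⟨j.val + i.val, hk⟩
      have h2 := hC ((j.val : ℝ) * (1 / N)) ((i.val : ℝ) * (1 / N))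
      linarith

lemma bellman_zero_nonneg (N : ℕ) (hN : 0 < N) (lam delta : ℝ) (hlam : 0 < lam)
    (hdelta : 0 < delta) (G : ℝ → ℝ) (hGnn : ∀ r ∈ Set.Icc (0 : ℝ) 1, 0 ≤ G r)
    (p : ℕ → ℝ) (C : ℝ → ℝ → ℝ) (j : Fin (N + 1)) :
    0 ≤ bellmanOp N lam delta G p C 0 j := by
  by_cases hj : j.val = 0
  · rw [bellman_zero _ _ _ _ _ _ _ _ hj]
  · rw [bellman_eq _ _ _ _ _ _ _ _ hj]
    refine le_trans ?_ (le_max_left _ _)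
    unfold bA
    have hmem : (j.val : ℝ) * (1 / N) ∈ Set.Icc (0 : ℝ) 1 := by
      constructor
      · positivity
      · have hjN : (j.val : ℝ) ≤ N := by exact_mod_cast Nat.lt_succ_iff.mp j.isLt
        have hN' : (0:ℝ) < N := by exact_mod_cast hN
        rw [mul_one_div, div_le_one hN']
        exact hjN
    have hG := hGnn _ hmem
    have hld : (0:ℝ) < lam + delta := by linarith
    simp only [Pi.zero_apply, zero_mul, Finset.sum_const_zero, mul_zero, add_zero]
    positivity
lemma bB_ge (N : ℕ) (C : ℝ → ℝ → ℝ) (v : Fin (N + 1) → ℝ) (j : Fin (N + 1))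
    (i : ℕ) (hi : i ≤ N - j.val) (hk : j.val + i < N + 1) :
    v ⟨j.val + i, hk⟩ - C (j.val * (1 / N)) (i * (1 / N)) ≤ bB N C v j := by
  unfold bB
  exact Finset.le_sup' (f := fun i : {x // x ∈ Finset.range (N - j.val + 1)} =>
      v ⟨j.val + i.val, by
          have hi := Finset.mem_range.mp i.prop
          have hj := j.isLt
          omega⟩ - C (j.val * (1 / N)) (i.val * (1 / N)))
    (Finset.mem_attach _ ⟨i, Finset.mem_range.mpr (by omega)⟩)

lemma bB_exists (N : ℕ) (C : ℝ → ℝ → ℝ) (v : Fin (N + 1) → ℝ) (j : Fin (N + 1)) :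
    ∃ i : ℕ, i ≤ N - j.val ∧ ∃ hk : j.val + i < N + 1,
      bB N C v j = v ⟨j.val + i, hk⟩ - C (j.val * (1 / N)) (i * (1 / N)) := by
  obtain ⟨i, _, hi⟩ := Finset.exists_mem_eq_sup'
    (Finset.attach_nonempty_iff.mpr (Finset.nonempty_range_add_one) :
      ((Finset.range (N - j.val + 1)).attach).Nonempty)
    (fun i : {x // x ∈ Finset.range (N - j.val + 1)} =>
      v ⟨j.val + i.val, by
          have hi := Finset.mem_range.mp i.prop
          have hj := j.isLt
          omega⟩ - C (j.val * (1 / N)) (i.val * (1 / N)))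
  have hi2 := Finset.mem_range.mp i.prop
  have hj := j.isLt
  refine ⟨i.val, by omega, by omega, ?_⟩
  exact hi
/-- The Jacobi iteration for the discretized Bellman operator converges from the zero vector
to the unique fixed point of the operator. -/
theorem bellmanOp_unique_fixedPoint_and_convergence (N : ℕ) (hN : 0 < N)
    (lam delta : ℝ) (hlam : 0 < lam) (hdelta : 0 < delta)
    (G : ℝ → ℝ) (hGnn : ∀ r ∈ Set.Icc (0 : ℝ) 1, 0 ≤ G r)
    (KG : ℝ) (hGbdd : ∀ r ∈ Set.Icc (0 : ℝ) 1, G r ≤ KG)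
    (p : ℕ → ℝ) (hp : ∀ i, 0 ≤ p i) (hpsum : ∑ i ∈ Finset.range (N + 1), p i ≤ 1)
    (C : ℝ → ℝ → ℝ) (c₀ : ℝ) (hc₀ : 0 < c₀) (hC : ∀ r ζ, c₀ ≤ C r ζ) :
    ∃ vstar : Fin (N + 1) → ℝ,
      bellmanOp N lam delta G p C vstar = vstar ∧
      (∀ w : Fin (N + 1) → ℝ, bellmanOp N lam delta G p C w = w → w = vstar) ∧
      Tendsto (fun n => (bellmanOp N lam delta G p C)^[n] 0) atTop (nhds vstar) := by
  set T := bellmanOp N lam delta G p C with hT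
  have hKG : 0 ≤ KG :=
    le_trans (hGnn 0 ⟨le_rfl, zero_le_one⟩) (hGbdd 0 ⟨le_rfl, zero_le_one⟩)
  set M := KG / delta with hMdef
  have hM0 : 0 ≤ M := by positivity
  set a := fun n => T^[n] (0 : Fin (N + 1) → ℝ) with ha
  have ha0 : a 0 = 0 := rfl
  have hasucc : ∀ n, a (n + 1) = T (a n) := fun n => Function.iterate_succ_apply' T n 0
  have hmono : ∀ n k, a n k ≤ a (n + 1) k := by
    intro n
    induction n with
    | zero =>
      intro k
      rw [hasucc 0, ha0]
      exact bellman_zero_nonneg N hN lam delta hlam hdelta G hGnn p C k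
    | succ n ih =>
      intro k
      calc a (n + 1) k = T (a n) k := by rw [hasucc n]
        _ ≤ T (a (n + 1)) k :=
          bellman_mono N lam delta hlam hdelta G p hp hpsum C _ _ ih k
        _ = a (n + 1 + 1) k := (congrFun (hasucc (n + 1)) k).symm
  have hbdd : ∀ n k, a n k ≤ M := by
    intro n
    induction n with
    | zero => intro k; rw [ha0]; exact hM0
    | succ n ih =>
      intro k
      rw [hasucc n]
      exact bellman_bdd N hN lam delta hlam hdelta G KG hGbdd hKG p hp hpsum C c₀ hc₀ hC _ ih k
  have hmono' : ∀ k, Monotone fun n => a n k :=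
    fun k => monotone_nat_of_le_succ fun n => hmono n k
  set vstar := fun k => ⨆ n, a n k with hvstar
  have htendk : ∀ k, Tendsto (fun n => a n k) atTop (nhds (vstar k)) := fun k =>
    tendsto_atTop_ciSup (hmono' k) ⟨M, by rintro x ⟨n, rfl⟩; exact hbdd n k⟩
  have htend : Tendsto a atTop (nhds vstar) := tendsto_pi_nhds.mpr htendk
  have hlip : LipschitzWith 1 T := by
    apply LipschitzWith.of_dist_le_mul
    intro v w
    rw [NNReal.coe_one, one_mul, dist_pi_le_iff dist_nonneg]
    intro j
    have hD : ∀ k, |v k - w k| ≤ dist v w := fun k => by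
      rw [← Real.dist_eq]; exact dist_le_pi_dist v w k
    rw [Real.dist_eq, abs_sub_le_iff]
    constructor
    · have := bellman_le N lam delta hlam hdelta G p hp hpsum C v w (dist v w) dist_nonneg
        (fun k => by have := hD k; rw [abs_le] at this; linarith) j
      linarith
    · have := bellman_le N lam delta hlam hdelta G p hp hpsum C w v (dist v w) dist_nonneg
        (fun k => by have := hD k; rw [abs_le] at this; linarith) j
      linarith
  have hfix : T vstar = vstar := by
    have h1 : Tendsto (fun n => a (n + 1)) atTop (nhds vstar) :=
      htend.comp (tendsto_add_atTop_nat 1)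
    have h2 : Tendsto (fun n => T (a n)) atTop (nhds (T vstar)) :=
      (hlip.continuous.tendsto vstar).comp htend
    have h3 : (fun n => a (n + 1)) = fun n => T (a n) := funext hasucc
    exact tendsto_nhds_unique h2 (h3 ▸ h1)
  have hfixle : ∀ v w : Fin (N + 1) → ℝ, T v = v → T w = w → ∀ k, v k ≤ w k := by
    intro v w hv hw
    by_contra hcon
    push_neg at hcon
    obtain ⟨k1, hk1⟩ := hcon
    have hne : (Finset.univ : Finset (Fin (N + 1))).Nonempty := Finset.univ_nonempty
    set d := Finset.univ.sup' hne (fun k => v k - w k) with hd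
    have hdle : ∀ k, v k - w k ≤ d := by
      intro k
      rw [hd]
      exact Finset.le_sup' (f := fun k => v k - w k) (Finset.mem_univ k)
    have hdpos : 0 < d := by
      have h1 : v k1 - w k1 ≤ Finset.univ.sup' hne (fun k => v k - w k) :=
        Finset.le_sup' (f := fun k => v k - w k) (Finset.mem_univ k1)
      rw [hd]
      exact lt_of_lt_of_le (by linarith) h1
    set F := Finset.univ.filter (fun k : Fin (N + 1) => v k - w k = d) with hF
    have hFne : F.Nonempty := by
      obtain ⟨k0, _, hk0⟩ := Finset.exists_mem_eq_sup' hne (fun k => v k - w k)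
      exact ⟨k0, Finset.mem_filter.mpr ⟨Finset.mem_univ _, hk0.symm⟩⟩
    set j := F.max' hFne with hjdef
    have hjF := F.max'_mem hFne
    have hjd : v j - w j = d := (Finset.mem_filter.mp hjF).2
    have hj0 : j.val ≠ 0 := by
      intro h0
      have hv0 : v j = 0 := by rw [← congrFun hv j]; exact bellman_zero _ _ _ _ _ _ _ _ h0
      have hw0 : w j = 0 := by rw [← congrFun hw j]; exact bellman_zero _ _ _ _ _ _ _ _ h0
      rw [hv0, hw0] at hjd
      linarith
    have hvj : v j = max (bA N lam delta G p v j) (bB N C v j) := by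
      rw [← congrFun hv j]; exact bellman_eq _ _ _ _ _ _ _ _ hj0
    have hwj : w j = max (bA N lam delta G p w j) (bB N C w j) := by
      rw [← congrFun hw j]; exact bellman_eq _ _ _ _ _ _ _ _ hj0
    have hwA : bA N lam delta G p w j ≤ w j := hwj ▸ le_max_left _ _
    have hwB : bB N C w j ≤ w j := hwj ▸ le_max_right _ _
    rcases max_choice (bA N lam delta G p v j) (bB N C v j) with hcase | hcase
    · -- no-intervention branch attains the max: contraction
      have hvA : v j = bA N lam delta G p v j := hvj.trans hcase
      have hAle := bA_le N lam delta hlam hdelta G p hp hpsum v w d (le_of_lt hdpos)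
        (fun k => by have := hdle k; linarith) j
      have hld : (0:ℝ) < lam + delta := by linarith
      have hq1 : lam / (lam + delta) < 1 := by rw [div_lt_one hld]; linarith
      have hqd : lam / (lam + delta) * d < d := by nlinarith
      linarith
    · -- intervention branch attains the max: fixed cost argument
      have hvB : v j = bB N C v j := hvj.trans hcase
      obtain ⟨i, hiN, hk, hiB⟩ := bB_exists N C v j
      have hvB2 : v j = v ⟨j.val + i, hk⟩ - C (j.val * (1 / N)) (i * (1 / N)) :=
        hvB.trans hiB
      have hwge : w ⟨j.val + i, hk⟩ - C (j.val * (1 / N)) (i * (1 / N)) ≤ w j :=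
        le_trans (bB_ge N C w j i hiN hk) hwB
      have h5 : d ≤ v ⟨j.val + i, hk⟩ - w ⟨j.val + i, hk⟩ := by
        rw [← hjd]; linarith
      have h6 : v ⟨j.val + i, hk⟩ - w ⟨j.val + i, hk⟩ = d := le_antisymm (hdle _) h5
      have hmem : (⟨j.val + i, hk⟩ : Fin (N + 1)) ∈ F :=
        Finset.mem_filter.mpr ⟨Finset.mem_univ _, h6⟩
      have hle := F.le_max' _ hmem
      rw [← hjdef] at hle
      have hi0 : i = 0 := by
        rw [Fin.le_def] at hle
        simp at hle
        omega
      subst hi0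
      have hjj : (⟨j.val + 0, hk⟩ : Fin (N + 1)) = j := Fin.ext (by simp)
      rw [hjj] at hvB2
      have hCge := hC ((j.val : ℝ) * (1 / N)) (((0:ℕ) : ℝ) * (1 / N))
      linarith
  refine ⟨vstar, hfix, ?_, htend⟩
  intro w hw
  funext k
  exact le_antisymm (hfixle w vstar hw hfix k) (hfixle vstar w hfix hw k)
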